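/- Let γ > 1 and define, for q = (q₁,…,q₈) ∈ ℝ⁸ with q₁ > 0, the pressure p(q) = (γ−1)·(q₅ − (q₂² + q₃² + q₄²)/(2q₁) − (q₆² + q₇² + q₈²)/2), the physical entropy s(q) = ln p(q) − γ ln q₁, and the entropy density U(q) = −q₁·s(q)/(γ−1). Then at every point q with q₁ > 0 and p(q) > 0, U is differentiable and its gradient equals the entropy variables: ∇U(q) = ((γ−s)/(γ−1) − ρ‖u⃗‖²/(2p), ρu/p, ρv/p, ρw/p, −ρ/p, ρB₁/p, ρB₂/p, ρB₃/p), where ρ = q₁, u = q₂/q₁, v = q₃/q₁, w = q₄/q₁, B₁ = q₆, B₂ = q₇, B₃ = q₈, p = p(q), s = s(q), and ‖u⃗‖² = u² + v² + w². -/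

import Mathlib

open Real

noncomputable section

/-- pressure as a function of the conservative variables q = (ρ, ρu, ρv, ρw, ρe, B₁, B₂, B₃) -/
def presQ (γ : ℝ) (q : EuclideanSpace ℝ (Fin 8)) : ℝ :=
  (γ - 1) * (q 4 - (q 1 ^ 2 + q 2 ^ 2 + q 3 ^ 2) / (2 * q 0) - (q 5 ^ 2 + q 6 ^ 2 + q 7 ^ 2) / 2)

/-- physical entropy s = ln p − γ ln ρ -/
def entSQ (γ : ℝ) (q : EuclideanSpace ℝ (Fin 8)) : ℝ :=
  Real.log (presQ γ q) - γ * Real.log (q 0)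

/-- entropy density U = −ρs/(γ−1) -/
def entUQ (γ : ℝ) (q : EuclideanSpace ℝ (Fin 8)) : ℝ :=
  -(q 0 * entSQ γ q) / (γ - 1)

private lemma vec8_0 (a₀ a₁ a₂ a₃ a₄ a₅ a₆ a₇ : ℝ) : ![a₀,a₁,a₂,a₃,a₄,a₅,a₆,a₇] (0:Fin 8) = a₀ := rfl
private lemma vec8_1 (a₀ a₁ a₂ a₃ a₄ a₅ a₆ a₇ : ℝ) : ![a₀,a₁,a₂,a₃,a₄,a₅,a₆,a₇] (1:Fin 8) = a₁ := rfl
private lemma vec8_2 (a₀ a₁ a₂ a₃ a₄ a₅ a₆ a₇ : ℝ) : ![a₀,a₁,a₂,a₃,a₄,a₅,a₆,a₇] (2:Fin 8) = a₂ := rfl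
private lemma vec8_3 (a₀ a₁ a₂ a₃ a₄ a₅ a₆ a₇ : ℝ) : ![a₀,a₁,a₂,a₃,a₄,a₅,a₆,a₇] (3:Fin 8) = a₃ := rfl
private lemma vec8_4 (a₀ a₁ a₂ a₃ a₄ a₅ a₆ a₇ : ℝ) : ![a₀,a₁,a₂,a₃,a₄,a₅,a₆,a₇] (4:Fin 8) = a₄ := rfl
private lemma vec8_5 (a₀ a₁ a₂ a₃ a₄ a₅ a₆ a₇ : ℝ) : ![a₀,a₁,a₂,a₃,a₄,a₅,a₆,a₇] (5:Fin 8) = a₅ := rfl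
private lemma vec8_6 (a₀ a₁ a₂ a₃ a₄ a₅ a₆ a₇ : ℝ) : ![a₀,a₁,a₂,a₃,a₄,a₅,a₆,a₇] (6:Fin 8) = a₆ := rfl
private lemma vec8_7 (a₀ a₁ a₂ a₃ a₄ a₅ a₆ a₇ : ℝ) : ![a₀,a₁,a₂,a₃,a₄,a₅,a₆,a₇] (7:Fin 8) = a₇ := rfl

/-- at every q with ρ = q₀ > 0 and p(q) > 0, the entropy density U is
differentiable and its gradient (w.r.t. the standard inner product on ℝ⁸) is the vector
of entropy variables. -/
theorem entropy_gradient (γ : ℝ) (hγ : 1 < γ) (q : EuclideanSpace ℝ (Fin 8))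
    (hρ : 0 < q 0) (hp : 0 < presQ γ q) :
    HasGradientAt (entUQ γ)
      ((WithLp.equiv 2 (Fin 8 → ℝ)).symm
        ![(γ - entSQ γ q) / (γ - 1)
            - q 0 * ((q 1 / q 0) ^ 2 + (q 2 / q 0) ^ 2 + (q 3 / q 0) ^ 2) / (2 * presQ γ q),
          q 0 * (q 1 / q 0) / presQ γ q,
          q 0 * (q 2 / q 0) / presQ γ q,
          q 0 * (q 3 / q 0) / presQ γ q,
          -(q 0 / presQ γ q),
          q 0 * q 5 / presQ γ q,
          q 0 * q 6 / presQ γ q,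
          q 0 * q 7 / presQ γ q]) q := by
  have hγ1 : γ - 1 ≠ 0 := by linarith
  have h1 : ∀ i : Fin 8, HasFDerivAt (fun x : EuclideanSpace ℝ (Fin 8) => x i)
      (PiLp.proj (𝕜 := ℝ) 2 (fun _ => ℝ) i) q := fun i => by
    exact PiLp.hasFDerivAt_apply 2 q i
  have h2 := fun i : Fin 8 => (hasDerivAt_pow 2 (q i)).comp_hasFDerivAt q (h1 i)
  have hinv : HasFDerivAt (fun x : EuclideanSpace ℝ (Fin 8) => ((fun y => y⁻¹) ∘ fun y => 2 * y 0) x)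
      _ q := (hasDerivAt_inv (by positivity)).comp_hasFDerivAt q ((h1 0).const_mul 2)
  have hP := (((h1 4).sub ((((h2 1).add (h2 2)).add (h2 3)).mul hinv)).sub
      ((((h2 5).add (h2 6)).add (h2 7)).const_mul 2⁻¹)).const_mul (γ - 1)
  have hPq : HasFDerivAt (presQ γ) _ q :=
    hP.congr_of_eventuallyEq (Filter.Eventually.of_forall fun x => by
      simp only [Function.comp_apply, Pi.add_apply, Pi.sub_apply, Pi.mul_apply, presQ]; ring)
  have hlogP := (Real.hasDerivAt_log hp.ne').comp_hasFDerivAt q hPq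
  have hlogρ := (Real.hasDerivAt_log hρ.ne').comp_hasFDerivAt q (h1 0)
  have hS := hlogP.sub (hlogρ.const_mul γ)
  have hU : HasFDerivAt (entUQ γ) _ q :=
    (((h1 0).mul hS).const_mul (-(γ - 1)⁻¹)).congr_of_eventuallyEq
      (Filter.Eventually.of_forall fun x => by
        simp only [Function.comp_apply, Pi.sub_apply, Pi.mul_apply, entUQ, entSQ]; ring)
  rw [hasGradientAt_iff_hasFDerivAt]
  refine hU.congr_fderiv ?_
  ext w
  simp only [ContinuousLinearMap.sub_apply, ContinuousLinearMap.add_apply,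
    ContinuousLinearMap.smul_apply, ContinuousLinearMap.coe_smul', Pi.smul_apply,
    PiLp.proj_apply, smul_eq_mul, InnerProductSpace.toDual_apply_apply, PiLp.inner_apply,
    RCLike.inner_apply, conj_trivial, WithLp.equiv_symm_apply, PiLp.toLp_apply, Fin.sum_univ_eight,
    vec8_0, vec8_1, vec8_2, vec8_3, vec8_4, vec8_5, vec8_6, vec8_7,
    Function.comp_apply, Pi.add_apply, Pi.sub_apply, pow_one, Nat.cast_ofNat, entSQ]
  have hp0 : presQ γ q ≠ 0 := hp.ne'
  have hq0 : q 0 ≠ 0 := hρ.ne'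
  field_simp
  ring

end
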